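/- Let f be a lattice anti-endomorphism of a lattice (A, ⊔, ⊓) and let x₁,…,xₙ (n ≥ 2) be a proper cycle with respect to f. Then the elements p = x₁ ⊔ x₂ ⊔ ⋯ ⊔ xₙ and q = x₁ ⊓ x₂ ⊓ ⋯ ⊓ xₙ satisfy p ≠ q, f(p) = q and f(q) = p; that is, p, q form a cycle of length 2 with respect to f. -/

import Mathlib

/-- `f` is a lattice anti-endomorphism. -/
def IsLatAntiEndo {A : Type*} [Lattice A] (f : A → A) : Prop :=
  ∀ x y : A, f (x ⊔ y) = f x ⊓ f y ∧ f (x ⊓ y) = f x ⊔ f y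

lemma antiEndo_sup' {A : Type*} [Lattice A] (f : A → A) (hf : IsLatAntiEndo f)
    {ι : Type*} (s : Finset ι) (hs : s.Nonempty) (x : ι → A) :
    f (s.sup' hs x) = s.inf' hs (f ∘ x) := by
  induction hs using Finset.Nonempty.cons_induction with
  | singleton a => simp
  | cons a s ha hs ih =>
    rw [Finset.sup'_cons, Finset.inf'_cons, (hf _ _).1, ih]
    rfl
    exact hs

lemma antiEndo_inf' {A : Type*} [Lattice A] (f : A → A) (hf : IsLatAntiEndo f)
    {ι : Type*} (s : Finset ι) (hs : s.Nonempty) (x : ι → A) :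
    f (s.inf' hs x) = s.sup' hs (f ∘ x) := by
  induction hs using Finset.Nonempty.cons_induction with
  | singleton a => simp
  | cons a s ha hs ih =>
    rw [Finset.inf'_cons, Finset.sup'_cons, (hf _ _).2, ih]
    rfl
    exact hs

/-- If `f` is a lattice anti-endomorphism and `x₁,…,xₙ` (`n ≥ 2`)
is a proper cycle of `f`, then `p = x₁ ⊔ ⋯ ⊔ xₙ` and `q = x₁ ⊓ ⋯ ⊓ xₙ` satisfy
`p ≠ q`, `f p = q` and `f q = p`, i.e. they form a cycle of length 2. -/
theorem sup_inf_of_proper_cycle {A : Type*} [Lattice A] (f : A → A)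
    (hf : IsLatAntiEndo f) (n : ℕ) (hn : 2 ≤ n) (x : Fin n → A)
    (hinj : Function.Injective x)
    (hcyc : ∀ i : Fin n, f (x i) = x ⟨((i : ℕ) + 1) % n, Nat.mod_lt _ i.pos⟩) :
    ∃ p q : A,
      p = Finset.univ.sup' (Finset.univ_nonempty_iff.mpr ⟨⟨0, by omega⟩⟩) x ∧
      q = Finset.univ.inf' (Finset.univ_nonempty_iff.mpr ⟨⟨0, by omega⟩⟩) x ∧
      p ≠ q ∧ f p = q ∧ f q = p := by
  have hne : (Finset.univ : Finset (Fin n)).Nonempty :=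
    Finset.univ_nonempty_iff.mpr ⟨⟨0, by omega⟩⟩
  set p := Finset.univ.sup' hne x with hp
  set q := Finset.univ.inf' hne x with hq
  set σ : Fin n → Fin n := fun i => ⟨((i : ℕ) + 1) % n, Nat.mod_lt _ i.pos⟩ with hσ
  have hσsurj : Function.Surjective σ := by
    intro j
    refine ⟨⟨((j : ℕ) + n - 1) % n, Nat.mod_lt _ (by omega)⟩, ?_⟩
    have hj := j.isLt
    apply Fin.ext
    simp only [hσ]
    have h1 : ((j : ℕ) + n - 1) + 1 = n + (j : ℕ) := by omega
    rw [Nat.mod_add_mod, h1, Nat.add_mod_left, Nat.mod_eq_of_lt hj]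
  have hfx : f ∘ x = x ∘ σ := by
    funext i; exact hcyc i
  have hfp : f p = q := by
    rw [hp, antiEndo_sup' f hf _ hne x, hfx, hq]
    apply le_antisymm
    · refine Finset.le_inf' _ _ fun i _ => ?_
      obtain ⟨j, hj⟩ := hσsurj i
      have := Finset.inf'_le (s := Finset.univ) (x ∘ σ) (Finset.mem_univ j)
      simpa [hj, Function.comp_def] using this
    · exact Finset.le_inf' _ _ fun i _ => Finset.inf'_le x (Finset.mem_univ (σ i))
  have hfq : f q = p := by
    rw [hq, antiEndo_inf' f hf _ hne x, hfx, hp]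
    apply le_antisymm
    · exact Finset.sup'_le _ _ fun i _ => Finset.le_sup' x (Finset.mem_univ (σ i))
    · refine Finset.sup'_le _ _ fun i _ => ?_
      obtain ⟨j, hj⟩ := hσsurj i
      have := Finset.le_sup' (s := Finset.univ) (x ∘ σ) (Finset.mem_univ j)
      simpa [hj, Function.comp_def] using this
  refine ⟨p, q, rfl, rfl, ?_, hfp, hfq⟩
  intro hpq
  have hall : ∀ i : Fin n, x i = p := fun i =>
    le_antisymm (Finset.le_sup' _ (Finset.mem_univ i))
      (hpq ▸ Finset.inf'_le _ (Finset.mem_univ i))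
  have h01 : x ⟨0, by omega⟩ = x ⟨1, by omega⟩ := by rw [hall, hall]
  have := hinj h01
  simp [Fin.ext_iff] at this
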